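/- arXiv:1808.09676 — 3 statements merged into one kernel-verified Lean document; each statement's English description precedes it below -/
import Mathlib

section
/- Let N, L, K be positive integers with K ≤ min{N, L}, and let (f_1, θ_1), …, (f_K, θ_K) ∈ [0,1) × [0,1) be pairwise distinct pairs. Then the vectors v_L(f_1) ⊗ v_N(θ_1), …, v_L(f_K) ⊗ v_N(θ_K) ∈ ℂ^{NL} are linearly independent; consequently, for any positive reals p_1, …, p_K, the matrix Σ_{k=1}^K p_k (v_L(f_k) v_L(f_k)ᴴ) ⊗ (v_N(θ_k) v_N(θ_k)ᴴ) has rank exactly K. -/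
open Matrix Complex
open scoped Kronecker ComplexOrder

/-- The steering vector `v_m(f) ∈ ℂ^m` with `j`-th entry `exp(2πi·j·f)`, `j = 0,…,m−1`. -/
noncomputable def steer (m : ℕ) (f : ℝ) : Fin m → ℂ :=
  fun j => Complex.exp (2 * (Real.pi : ℂ) * Complex.I * (j : ℕ) * (f : ℝ))

/-- The rank-one outer product `v_m(f) v_m(f)ᴴ`. -/
noncomputable def steerMat (m : ℕ) (f : ℝ) : Matrix (Fin m) (Fin m) ℂ :=
  Matrix.vecMulVec (steer m f) (star (steer m f))

lemma steer_pow (m : ℕ) (f : ℝ) (j : Fin m) :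
    steer m f j = Complex.exp (2 * (Real.pi : ℂ) * Complex.I * (f : ℝ)) ^ (j : ℕ) := by
  rw [steer, show (2 * (Real.pi : ℂ) * Complex.I * ((j : ℕ) : ℂ) * (f : ℝ)) =
    ((j : ℕ) : ℂ) * (2 * (Real.pi : ℂ) * Complex.I * (f : ℝ)) by ring, Complex.exp_nat_mul]

lemma exp_two_pi_inj {a b : ℝ} (ha : a ∈ Set.Ico (0 : ℝ) 1) (hb : b ∈ Set.Ico (0 : ℝ) 1)
    (h : Complex.exp (2 * (Real.pi : ℂ) * Complex.I * (a : ℝ)) =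
      Complex.exp (2 * (Real.pi : ℂ) * Complex.I * (b : ℝ))) : a = b := by
  rw [Complex.exp_eq_exp_iff_exists_int] at h
  obtain ⟨n, hn⟩ := h
  have h2 : (2 * (Real.pi : ℂ) * Complex.I) ≠ 0 := by
    simp [Real.pi_ne_zero, Complex.I_ne_zero, Complex.ofReal_ne_zero]
  have hab : (a : ℂ) = (b : ℂ) + (n : ℂ) := by
    apply mul_left_cancel₀ h2
    rw [hn]; ring
  have hab' : a = b + (n : ℝ) := by
    exact_mod_cast hab
  have h1 : (n : ℝ) < 1 := by
    have := ha.2; have := hb.1; linarith [hab']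
  have h2' : (-1 : ℝ) < (n : ℝ) := by
    have := ha.1; have := hb.2; linarith [hab']
  have : n = 0 := by
    have l1 : n < 1 := by exact_mod_cast h1
    have l2 : -1 < n := by exact_mod_cast h2'
    omega
  simp [this] at hab'; linarith [hab']

/-- Vandermonde-type vanishing lemma. -/
lemma vand_zero {ι : Type*} [Fintype ι] (m : ℕ) (x c : ι → ℂ)
    (hinj : Function.Injective x) (hcard : Fintype.card ι ≤ m)
    (h : ∀ n : Fin m, ∑ k, c k * x k ^ (n : ℕ) = 0) : ∀ k, c k = 0 := by
  set r := Fintype.card ι with hr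
  let e : ι ≃ Fin r := Fintype.equivFin ι
  have key : (fun j : Fin r => c (e.symm j)) = 0 := by
    apply Matrix.eq_zero_of_forall_pow_sum_mul_pow_eq_zero
      (f := fun j : Fin r => x (e.symm j))
    · exact hinj.comp e.symm.injective
    · intro i
      have := h (Fin.castLE hcard i)
      rw [← Equiv.sum_comp e.symm (fun k => c k * x k ^ ((Fin.castLE hcard i : Fin m) : ℕ))] at this
      simpa using this
  intro k
  have := congrFun key (e k)
  simpa using this

/-- If `K ≤ min{N,L}` and the pairs `(f_k, θ_k) ∈ [0,1)²` are pairwise distinct, the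
Kronecker vectors `v_L(f_k) ⊗ v_N(θ_k) ∈ ℂ^{NL}` are linearly independent; consequently,
for any positive weights `p_k`, the matrix
`Σ_k p_k (v_L(f_k)v_L(f_k)ᴴ) ⊗ (v_N(θ_k)v_N(θ_k)ᴴ)` has rank exactly `K`. -/
theorem steering_kronecker_linearIndependent_rank
    (N L K : ℕ) (hN : 0 < N) (hL : 0 < L) (hKpos : 0 < K) (hK : K ≤ min N L)
    (f θ : Fin K → ℝ)
    (hf : ∀ k, f k ∈ Set.Ico (0 : ℝ) 1) (hθ : ∀ k, θ k ∈ Set.Ico (0 : ℝ) 1)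
    (hdist : Function.Injective (fun k => (f k, θ k))) :
    LinearIndependent ℂ
      (fun k : Fin K => fun i : Fin L × Fin N => steer L (f k) i.1 * steer N (θ k) i.2) ∧
    ∀ p : Fin K → ℝ, (∀ k, 0 < p k) →
      (∑ k, (p k : ℂ) • (steerMat L (f k) ⊗ₖ steerMat N (θ k))).rank = K := by
  classical
  have hKL : K ≤ L := hK.trans (min_le_right _ _)
  have hKN : K ≤ N := hK.trans (min_le_left _ _)
  set z : Fin K → ℂ := fun k => Complex.exp (2 * (Real.pi : ℂ) * Complex.I * (f k : ℝ)) with hz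
  set w : Fin K → ℂ := fun k => Complex.exp (2 * (Real.pi : ℂ) * Complex.I * (θ k : ℝ)) with hw
  have hzf : ∀ k k', z k = z k' → f k = f k' := fun k k' h => exp_two_pi_inj (hf k) (hf k') h
  have hwθ : ∀ k k', w k = w k' → θ k = θ k' := fun k k' h => exp_two_pi_inj (hθ k) (hθ k') h
  -- the key vanishing statement
  have key : ∀ c : Fin K → ℂ,
      (∀ l : Fin L, ∀ n : Fin N, ∑ k, c k * z k ^ (l : ℕ) * w k ^ (n : ℕ) = 0) →
      ∀ k, c k = 0 := by
    intro c hc k0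
    -- step 1: for each n, fiber sums over equal z vanish
    have step1 : ∀ n : Fin N,
        ∀ k1, ∑ k ∈ Finset.univ.filter (fun k => z k = z k1), c k * w k ^ (n : ℕ) = 0 := by
      intro n k1
      set t : Finset ℂ := Finset.univ.image z with ht
      have hcard : Fintype.card ↥t ≤ L := by
        rw [Fintype.card_coe]
        exact le_trans (Finset.card_image_le.trans (by simp)) hKL
      have := vand_zero L (fun a : ↥t => (a : ℂ))
        (fun a : ↥t => ∑ k ∈ Finset.univ.filter (fun k => z k = (a : ℂ)), c k * w k ^ (n : ℕ))
        Subtype.coe_injective hcard ?_ ⟨z k1, by simp [ht]⟩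
      · simpa using this
      · intro l
        have e1 : ∀ a : ℂ,
            (∑ k ∈ Finset.univ.filter (fun k => z k = a), c k * w k ^ (n : ℕ)) * a ^ (l : ℕ)
            = ∑ k ∈ Finset.univ.filter (fun k => z k = a),
                c k * z k ^ (l : ℕ) * w k ^ (n : ℕ) := by
          intro a
          rw [Finset.sum_mul]
          apply Finset.sum_congr rfl
          intro k hk
          rw [Finset.mem_filter] at hk
          rw [← hk.2]; ring
        calc (∑ a : ↥t, (∑ k ∈ Finset.univ.filter (fun k => z k = (a : ℂ)),
                c k * w k ^ (n : ℕ)) * (a : ℂ) ^ (l : ℕ))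
            = ∑ a ∈ t, (∑ k ∈ Finset.univ.filter (fun k => z k = a),
                c k * w k ^ (n : ℕ)) * a ^ (l : ℕ) :=
              Finset.sum_coe_sort t (fun a => (∑ k ∈ Finset.univ.filter (fun k => z k = a),
                c k * w k ^ (n : ℕ)) * a ^ (l : ℕ))
          _ = ∑ a ∈ t, ∑ k ∈ Finset.univ.filter (fun k => z k = a),
                c k * z k ^ (l : ℕ) * w k ^ (n : ℕ) :=
              Finset.sum_congr rfl (fun a _ => e1 a)
          _ = ∑ k, c k * z k ^ (l : ℕ) * w k ^ (n : ℕ) :=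
              Finset.sum_fiberwise_of_maps_to
                (fun k _ => Finset.mem_image_of_mem z (Finset.mem_univ k)) _
          _ = 0 := hc l n
    -- step 2
    set t2 : Finset (Fin K) := Finset.univ.filter (fun k => z k = z k0) with ht2
    have hw_inj : Function.Injective (fun a : ↥t2 => w (a : Fin K)) := by
      rintro ⟨a, haa⟩ ⟨b, hbb⟩ hab
      simp only [ht2, Finset.mem_filter] at haa hbb
      simp only at hab
      have hfab : f a = f b := hzf a b (haa.2.trans hbb.2.symm)
      have hθab : θ a = θ b := hwθ a b hab
      have := hdist (show (fun k => (f k, θ k)) a = (fun k => (f k, θ k)) b by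
        simp [hfab, hθab])
      exact Subtype.ext this
    have hcard2 : Fintype.card ↥t2 ≤ N := by
      rw [Fintype.card_coe]
      exact le_trans ((Finset.card_filter_le _ _).trans (by simp)) hKN
    have := vand_zero N (fun a : ↥t2 => w (a : Fin K)) (fun a : ↥t2 => c (a : Fin K))
      hw_inj hcard2 ?_ ⟨k0, by simp [ht2]⟩
    · simpa using this
    · intro n
      rw [Finset.sum_coe_sort t2 (fun k => c k * w k ^ (n : ℕ))]
      exact step1 n k0
  -- linear independence
  have hLI : LinearIndependent ℂ
      (fun k : Fin K => fun i : Fin L × Fin N => steer L (f k) i.1 * steer N (θ k) i.2) := by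
    rw [Fintype.linearIndependent_iff]
    intro c hc
    apply key c
    intro l n
    have := congrFun hc (l, n)
    simp only [Finset.sum_apply, Pi.smul_apply, smul_eq_mul, Pi.zero_apply] at this
    rw [← this]
    apply Finset.sum_congr rfl
    intro k _
    rw [steer_pow, steer_pow]
    ring
  refine ⟨hLI, ?_⟩
  intro p hp
  set u : Fin K → (Fin L × Fin N) → ℂ :=
    fun k => fun i => steer L (f k) i.1 * steer N (θ k) i.2 with hu
  set B : Matrix (Fin K) (Fin L × Fin N) ℂ :=
    fun k i => ((Real.sqrt (p k) : ℝ) : ℂ) * star (u k i) with hB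
  have hM : (∑ k, (p k : ℂ) • (steerMat L (f k) ⊗ₖ steerMat N (θ k))) = Bᴴ * B := by
    ext i j
    simp only [Matrix.sum_apply, Matrix.smul_apply, Matrix.mul_apply, Matrix.conjTranspose_apply,
      hB, hu, steerMat, Matrix.kroneckerMap_apply, Matrix.vecMulVec_apply, Pi.star_apply,
      smul_eq_mul, star_mul', star_star, RCLike.star_def, Complex.conj_ofReal]
    apply Finset.sum_congr rfl
    intro k _
    have hsq : ((Real.sqrt (p k) : ℝ) : ℂ) * ((Real.sqrt (p k) : ℝ) : ℂ) = (p k : ℂ) := by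
      rw [← Complex.ofReal_mul, Real.mul_self_sqrt (hp k).le]
    simp only [Complex.conj_conj]
    simp only [Matrix.conjTranspose, Matrix.transpose, Matrix.map, Matrix.of_apply]
    simp only [star_mul', star_star, RCLike.star_def, Complex.conj_ofReal, Complex.conj_conj]
    rw [← hsq]
    ring
  rw [hM, Matrix.rank_conjTranspose_mul_self]
  have hBLI : LinearIndependent ℂ B := by
    rw [Fintype.linearIndependent_iff]
    intro d hd
    have hd' : ∑ k, (starRingEnd ℂ (d k) * ((Real.sqrt (p k) : ℝ) : ℂ)) • u k = 0 := by
      funext i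
      have := congrFun hd i
      simp only [Finset.sum_apply, Pi.smul_apply, smul_eq_mul, Pi.zero_apply, hB] at this ⊢
      have := congrArg (starRingEnd ℂ) this
      rw [map_sum] at this
      simpa [mul_comm, mul_assoc, mul_left_comm, Complex.conj_ofReal] using this
    have := Fintype.linearIndependent_iff.mp hLI
      (fun k => starRingEnd ℂ (d k) * ((Real.sqrt (p k) : ℝ) : ℂ)) hd'
    intro k
    have hk := this k
    have hs : ((Real.sqrt (p k) : ℝ) : ℂ) ≠ 0 := by
      simp [Real.sqrt_ne_zero'.mpr (hp k)]
    have : starRingEnd ℂ (d k) = 0 := by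
      rcases mul_eq_zero.mp hk with h | h
      · exact h
      · exact absurd h hs
    simpa using congrArg (starRingEnd ℂ) this
  rw [hBLI.rank_matrix]
  simp
end

section
/- Let n be a positive integer, let R ∈ ℂ^{n×n} be a Hermitian positive definite matrix, and let y ∈ ℂ^n. Then ‖R^{-1/2}(y yᴴ − R)‖_F² = ‖y‖₂² · (yᴴ R⁻¹ y) + tr(R) − 2‖y‖₂², where R^{-1/2} denotes the (unique) positive semidefinite square root of R⁻¹, ‖·‖_F is the Frobenius norm, and yᴴ R⁻¹ y is a nonnegative real number. (Expansion of the covariance fitting criterion.) -/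
open Matrix Complex
open scoped ComplexOrder

lemma trace_vecMulVec' {n : ℕ} (a b : Fin n → ℂ) :
    (Matrix.vecMulVec a b).trace = a ⬝ᵥ b := by
  simp [Matrix.trace, Matrix.vecMulVec_apply, dotProduct, Matrix.diag]

lemma mul_vecMulVec' {n : ℕ} (M : Matrix (Fin n) (Fin n) ℂ) (a b : Fin n → ℂ) :
    M * Matrix.vecMulVec a b = Matrix.vecMulVec (M *ᵥ a) b := by
  ext i j
  simp [Matrix.mul_apply, Matrix.vecMulVec_apply, Matrix.mulVec, dotProduct,
    Finset.sum_mul, mul_assoc]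

lemma vecMulVec_mul' {n : ℕ} (M : Matrix (Fin n) (Fin n) ℂ) (a b : Fin n → ℂ) :
    Matrix.vecMulVec a b * M = Matrix.vecMulVec a (b ᵥ* M) := by
  ext i j
  simp [Matrix.mul_apply, Matrix.vecMulVec_apply, Matrix.vecMul, dotProduct,
    Finset.mul_sum, mul_assoc]

lemma vecMul_vecMulVec' {n : ℕ} (b c d : Fin n → ℂ) :
    b ᵥ* Matrix.vecMulVec c d = (b ⬝ᵥ c) • d := by
  ext j
  simp [Matrix.vecMul, Matrix.vecMulVec_apply, dotProduct, Finset.sum_mul, mul_assoc]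

lemma vecMulVec_herm {n : ℕ} (y : Fin n → ℂ) :
    (Matrix.vecMulVec y (star y))ᴴ = Matrix.vecMulVec y (star y) := by
  ext i j
  simp [Matrix.vecMulVec_apply, mul_comm]

/-- Expansion of the covariance fitting criterion: for Hermitian positive definite
`R ∈ ℂ^{n×n}`, `y ∈ ℂ^n`, and `S` the (unique) positive semidefinite square root of
`R⁻¹`, one has `‖S(y yᴴ − R)‖_F² = ‖y‖₂²·(yᴴ R⁻¹ y) + tr(R) − 2‖y‖₂²`
(as an identity in `ℂ`, using `‖A‖_F² = tr(Aᴴ A)`). -/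
theorem covariance_fitting_expansion
    (n : ℕ) (hn : 0 < n) (R : Matrix (Fin n) (Fin n) ℂ) (hR : R.PosDef)
    (y : Fin n → ℂ)
    (S : Matrix (Fin n) (Fin n) ℂ) (hS : S.PosSemidef) (hSsq : S * S = R⁻¹) :
    ((S * (Matrix.vecMulVec y (star y) - R))ᴴ * (S * (Matrix.vecMulVec y (star y) - R))).trace
      = ((∑ i, Complex.normSq (y i) : ℝ) : ℂ) * (star y ⬝ᵥ (R⁻¹ *ᵥ y))
        + R.trace - 2 * ((∑ i, Complex.normSq (y i) : ℝ) : ℂ) := by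
  set P := Matrix.vecMulVec y (star y) with hP
  have hPh : Pᴴ = P := vecMulVec_herm y
  have hRh : Rᴴ = R := hR.isHermitian
  have hSh : Sᴴ = S := hS.isHermitian
  have hU : IsUnit R := hR.isUnit
  have hinv : R⁻¹ * R = 1 := Matrix.nonsing_inv_mul R (Matrix.isUnit_iff_isUnit_det R |>.mp hU)
  have hinv' : R * R⁻¹ = 1 := Matrix.mul_nonsing_inv R (Matrix.isUnit_iff_isUnit_det R |>.mp hU)
  have key : (S * (P - R))ᴴ * (S * (P - R)) = (P - R) * R⁻¹ * (P - R) := by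
    rw [Matrix.conjTranspose_mul, Matrix.conjTranspose_sub, hPh, hRh, hSh]
    rw [show (P - R) * S * (S * (P - R)) = (P - R) * (S * S) * (P - R) by
      noncomm_ring]
    rw [hSsq]
  rw [key]
  have expand : (P - R) * R⁻¹ * (P - R)
      = P * R⁻¹ * P - P * (R⁻¹ * R) - (R * R⁻¹) * P + R * (R⁻¹ * R) := by
    noncomm_ring
  rw [expand, hinv, hinv', Matrix.mul_one, Matrix.one_mul, Matrix.mul_one]
  have hPRP : (P * R⁻¹ * P).trace
      = (star y ⬝ᵥ (R⁻¹ *ᵥ y)) * (star y ⬝ᵥ y) := by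
    rw [hP, vecMulVec_mul', vecMulVec_mul', trace_vecMulVec']
    rw [vecMul_vecMulVec', dotProduct_smul, ← Matrix.dotProduct_mulVec,
      dotProduct_comm y (star y)]
    simp [smul_eq_mul]
  have htrP : P.trace = ((∑ i, Complex.normSq (y i) : ℝ) : ℂ) := by
    rw [hP, trace_vecMulVec']
    push_cast
    simp [dotProduct, Complex.mul_conj]
  have hyy : (star y ⬝ᵥ y) = ((∑ i, Complex.normSq (y i) : ℝ) : ℂ) := by
    push_cast
    simp [dotProduct, mul_comm, Complex.mul_conj]
  simp only [Matrix.trace_add, Matrix.trace_sub, hPRP, htrP, hyy]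
  push_cast
  ring
end

section
/- Let N₁, N₂ be positive integers and let S = {1, 2, …, N₁} ∪ {m(N₁+1) : m = 1, …, N₂} ⊆ ℤ be the sensor position set of a nested array with an N₁-element dense subarray and an N₂-element sparse subarray. Then the difference set {a − b : a, b ∈ S} equals the full integer interval {d ∈ ℤ : |d| ≤ N₂(N₁+1) − 1}; in particular, the difference coarray of the nested array is a hole-free (virtual) uniform linear array with 2N₂(N₁+1) − 1 consecutive positions. -/
/-- The difference coarray of a nested array with an `N₁`-element dense subarray at
positions `1,…,N₁` and an `N₂`-element sparse subarray at positions `m(N₁+1)`,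
`m = 1,…,N₂`, is the full hole-free integer interval
`{d : |d| ≤ N₂(N₁+1) − 1}`, consisting of `2N₂(N₁+1) − 1` consecutive positions. -/
theorem nested_array_difference_coarray
    (N₁ N₂ : ℕ) (h₁ : 0 < N₁) (h₂ : 0 < N₂) :
    let S : Set ℤ :=
      {x | (1 ≤ x ∧ x ≤ (N₁ : ℤ)) ∨
            ∃ m : ℤ, 1 ≤ m ∧ m ≤ (N₂ : ℤ) ∧ x = m * ((N₁ : ℤ) + 1)}
    {d : ℤ | ∃ a ∈ S, ∃ b ∈ S, a - b = d}
        = {d : ℤ | |d| ≤ (N₂ : ℤ) * ((N₁ : ℤ) + 1) - 1} ∧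
      {d : ℤ | ∃ a ∈ S, ∃ b ∈ S, a - b = d}.ncard = 2 * N₂ * (N₁ + 1) - 1 := by
  intro S
  have hN1 : (1:ℤ) ≤ (N₁:ℤ) := by exact_mod_cast h₁
  have hN2 : (1:ℤ) ≤ (N₂:ℤ) := by exact_mod_cast h₂
  have hmem : ∀ x ∈ S, 1 ≤ x ∧ x ≤ (N₂:ℤ) * ((N₁:ℤ) + 1) := by
    rintro x (⟨hx1, hx2⟩ | ⟨m, hm1, hm2, rfl⟩)
    · refine ⟨hx1, ?_⟩
      nlinarith
    · constructor
      · nlinarith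
      · nlinarith
  have hEq : {d : ℤ | ∃ a ∈ S, ∃ b ∈ S, a - b = d}
      = {d : ℤ | |d| ≤ (N₂:ℤ) * ((N₁:ℤ) + 1) - 1} := by
    ext d
    simp only [Set.mem_setOf_eq]
    constructor
    · rintro ⟨a, ha, b, hb, rfl⟩
      obtain ⟨ha1, ha2⟩ := hmem a ha
      obtain ⟨hb1, hb2⟩ := hmem b hb
      rw [abs_le]
      constructor <;> linarith
    · intro hd
      have key : ∀ e : ℤ, 0 ≤ e → e ≤ (N₂:ℤ) * ((N₁:ℤ) + 1) - 1 →
          ∃ a ∈ S, ∃ b ∈ S, a - b = e := by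
        intro e he hle
        set P : ℤ := (N₁:ℤ) + 1 with hP
        have hPpos : 0 < P := by linarith
        have hr0 : 0 ≤ e % P := Int.emod_nonneg e (by linarith)
        have hrP : e % P < P := Int.emod_lt_of_pos e hPpos
        have heq : P * (e / P) + e % P = e := Int.mul_ediv_add_emod e P
        have hq0 : 0 ≤ e / P := Int.ediv_nonneg he (le_of_lt hPpos)
        by_cases hr : e % P = 0
        · have hqle : e / P ≤ (N₂:ℤ) - 1 := by nlinarith
          refine ⟨(e / P + 1) * P, Or.inr ⟨e / P + 1, by linarith, by linarith, rfl⟩,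
            1 * P, Or.inr ⟨1, le_refl 1, hN2, rfl⟩, ?_⟩
          rw [hr] at heq
          linarith [heq]
        · have hr1 : 1 ≤ e % P := lt_of_le_of_ne hr0 (Ne.symm hr)
          have hq2 : e / P + 1 ≤ (N₂:ℤ) := by nlinarith
          refine ⟨(e / P + 1) * P, Or.inr ⟨e / P + 1, by linarith, hq2, rfl⟩,
            P - e % P, Or.inl ⟨by linarith, by rw [hP]; linarith⟩, ?_⟩
          linarith [heq]
      rw [abs_le] at hd
      rcases le_or_gt 0 d with h0 | h0
      · exact key d h0 hd.2
      · obtain ⟨a, ha, b, hb, hab⟩ := key (-d) (by linarith) (by linarith)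
        exact ⟨b, hb, a, ha, by linarith⟩
  refine ⟨hEq, ?_⟩
  rw [hEq]
  have hI : {d : ℤ | |d| ≤ (N₂:ℤ) * ((N₁:ℤ) + 1) - 1}
      = (Finset.Icc (-((N₂:ℤ) * ((N₁:ℤ) + 1) - 1)) ((N₂:ℤ) * ((N₁:ℤ) + 1) - 1) : Finset ℤ) := by
    ext d
    simp [abs_le, and_comm]
    rw [abs_lt]
    constructor <;> rintro ⟨h1, h2⟩ <;> constructor <;> linarith
  rw [hI, Set.ncard_coe_finset, Int.card_Icc]
  have hcast : (N₂:ℤ) * ((N₁:ℤ) + 1) = ((N₂ * (N₁ + 1) : ℕ) : ℤ) := by push_cast; ring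
  have hpos : 1 ≤ N₂ * (N₁ + 1) := Nat.one_le_iff_ne_zero.mpr (by positivity)
  rw [hcast, mul_assoc]
  omega
end
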